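/- Let F(t) = C·t^a·(t^n−1)^b·∏_{i=1}^{d}(t^n−c_i) be a real polynomial of positive degree, where a, b, d are nonnegative integers, C ≠ 0, and c₁,…,c_d are pairwise distinct real numbers in the open interval (0,1). Then the derivative F'(t) = C'·t^{a'}·(t^n−1)^{b'}·∏_{i=1}^{d'}(t^n−c'_i) for some C' ≠ 0, nonnegative integers a', b', d', and pairwise distinct c'_i ∈ (0,1). Moreover: if a > 0 then a' = a−1; if a = 0 then a' = n−1; if b > 0 then b' = b−1; if b = 0 then b' = 0. -/

import Mathlib

open Polynomial

private lemma chain_aux (g g' : ℝ → ℝ) (hgc : ContinuousOn g (Set.Icc 0 1))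
    (hgd : ∀ x ∈ Set.Ioo (0:ℝ) 1, HasDerivAt g (g' x) x)
    (T : Finset ℝ) (hT : ∀ x ∈ T, x ∈ Set.Icc (0:ℝ) 1)
    (hroot : ∀ x ∈ T, g x = 0) :
    ∃ e : Fin (T.card - 1) → ℝ, Function.Injective e ∧
      (∀ j, e j ∈ Set.Ioo (0:ℝ) 1) ∧ (∀ j, g' (e j) = 0) := by
  classical
  set k := T.card with hk
  let y : Fin k ≃o {x // x ∈ T} := T.orderIsoOfFin rfl
  have key : ∀ j : Fin (k - 1), ∃ x, x ∈ Set.Ioo ((y ⟨j.1, by have := j.2; omega⟩ : ℝ))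
      ((y ⟨j.1+1, by have := j.2; omega⟩ : ℝ)) ∧ g' x = 0 := by
    intro j
    have hj1 : j.1 < k := by have := j.2; omega
    have hj2 : j.1 + 1 < k := by have := j.2; omega
    set u : ℝ := (y ⟨j.1, by have := j.2; omega⟩ : ℝ) with hu'
    set v : ℝ := (y ⟨j.1+1, by have := j.2; omega⟩ : ℝ) with hv'
    have hu : u ∈ T := (y _).2
    have hv : v ∈ T := (y _).2
    have huv : u < v := by
      have := y.strictMono (show (⟨j.1, hj1⟩ : Fin k) < ⟨j.1+1, hj2⟩ by simp [Fin.lt_def])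
      exact_mod_cast this
    have hu01 := hT _ hu
    have hv01 := hT _ hv
    have hcont : ContinuousOn g (Set.Icc u v) := hgc.mono (Set.Icc_subset_Icc hu01.1 hv01.2)
    have heq : g u = g v := by rw [hroot _ hu, hroot _ hv]
    have hderiv : ∀ x ∈ Set.Ioo u v, HasDerivAt g (g' x) x := fun x hx =>
      hgd x ⟨lt_of_le_of_lt hu01.1 hx.1, lt_of_lt_of_le hx.2 hv01.2⟩
    obtain ⟨x, hx, hx0⟩ := exists_hasDerivAt_eq_zero huv hcont heq hderiv
    exact ⟨x, hx, hx0⟩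
  choose e he1 he2 using key
  have mono : ∀ j j' : Fin (k-1), j < j' → e j < e j' := by
    intro j j' hjj
    have h1 : e j < (y ⟨j.1+1, by have := j.2; omega⟩ : ℝ) := (he1 j).2
    have h2 : ((y ⟨j'.1, by have := j'.2; omega⟩ : ℝ)) < e j' := (he1 j').1
    have h3 : (y ⟨j.1+1, by have := j.2; omega⟩ : ℝ) ≤ (y ⟨j'.1, by have := j'.2; omega⟩ : ℝ) := by
      have := y.monotone (show (⟨j.1+1, by have := j.2; omega⟩ : Fin k)
          ≤ ⟨j'.1, by have := j'.2; omega⟩ by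
        exact Fin.mk_le_mk.mpr (by have := Fin.lt_def.mp hjj; omega))
      exact_mod_cast this
    linarith
  refine ⟨e, ?_, ?_, fun j => he2 j⟩
  · intro j j' h
    rcases lt_trichotomy j j' with hlt | heq | hgt
    · exact absurd h (ne_of_lt (mono _ _ hlt))
    · exact heq
    · exact absurd h.symm (ne_of_lt (mono _ _ hgt))
  · intro j
    have h1 := (he1 j).1
    have h2 := (he1 j).2
    have hu01 := hT _ (y ⟨j.1, by have := j.2; omega⟩).2
    have hv01 := hT _ (y ⟨j.1+1, by have := j.2; omega⟩).2
    exact ⟨lt_of_le_of_lt hu01.1 h1, lt_of_lt_of_le h2 hv01.2⟩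

private lemma core_factor (R : Polynomial ℝ) (hR : R ≠ 0) (b' m : ℕ)
    (hdeg : R.natDegree = b' + m)
    (hdvd : (X - 1) ^ b' ∣ R) (e : Fin m → ℝ) (he : Function.Injective e)
    (h01 : ∀ j, e j ∈ Set.Ioo (0:ℝ) 1) (hroot : ∀ j, R.eval (e j) = 0) :
    R = Polynomial.C R.leadingCoeff * (X - 1) ^ b' *
      ∏ j : Fin m, (X - Polynomial.C (e j)) := by
  classical
  set M : Multiset ℝ := Multiset.replicate b' 1 + Finset.univ.val.map e with hM
  have hnd : (Finset.univ.val.map e).Nodup := Finset.univ.nodup.map he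
  have hle : M ≤ R.roots := by
    rw [Multiset.le_iff_count]
    intro x
    rw [hM, Multiset.count_add, Multiset.count_replicate, Polynomial.count_roots]
    by_cases hx : (1:ℝ) = x
    · subst hx
      have h0 : Multiset.count (1:ℝ) (Finset.univ.val.map e) = 0 := by
        rw [Multiset.count_eq_zero]
        intro hmem
        obtain ⟨j, _, hj⟩ := Multiset.mem_map.mp hmem
        exact (h01 j).2.ne hj
      rw [h0, if_pos rfl, add_zero]
      rw [Polynomial.le_rootMultiplicity_iff hR]
      simpa using hdvd
    · rw [if_neg hx, zero_add]
      by_cases hmem : x ∈ Finset.univ.val.map e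
      · have h1 : Multiset.count x (Finset.univ.val.map e) = 1 :=
          Multiset.count_eq_one_of_mem hnd hmem
        rw [h1]
        obtain ⟨j, _, hj⟩ := Multiset.mem_map.mp hmem
        rw [Nat.one_le_iff_ne_zero, ← Nat.pos_iff_ne_zero]
        exact (Polynomial.rootMultiplicity_pos hR).mpr (hj ▸ hroot j)
      · rw [Multiset.count_eq_zero.2 hmem]
        exact Nat.zero_le _
  have hcardM : Multiset.card M = b' + m := by
    simp [hM]
  have hroots : R.roots = M := by
    have h1 : Multiset.card R.roots ≤ Multiset.card M := by
      rw [hcardM, ← hdeg]; exact R.card_roots'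
    exact (Multiset.eq_of_le_of_card_le hle h1).symm
  have hfin := Polynomial.C_leadingCoeff_mul_prod_multiset_X_sub_C
    (p := R) (by rw [hroots, hcardM, hdeg])
  have hprod : (M.map fun a => X - C a).prod
      = (X - 1) ^ b' * ∏ j : Fin m, (X - Polynomial.C (e j)) := by
    rw [hM, Multiset.map_add, Multiset.prod_add, Multiset.map_replicate,
      Multiset.prod_replicate, Multiset.map_map, map_one, Finset.prod_eq_multiset_prod]
    simp only [Function.comp_def]
  rw [mul_assoc, ← hprod, ← hroots, hfin]

/-- Rolle-type lemma: if
`F(t) = C·t^a·(t^n − 1)^b·∏ᵢ(t^n − cᵢ)` is a real polynomial of positive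
degree, with `c₁,…,c_d` pairwise distinct in `(0,1)`, then `F'` has the
same shape, with the stated behaviour of the exponents `a` and `b`. -/
theorem stmt5 (n : ℕ) (hn : 0 < n) (K : ℝ) (hK : K ≠ 0)
    (a b d : ℕ) (c : Fin d → ℝ) (hc : ∀ i, c i ∈ Set.Ioo (0 : ℝ) 1)
    (hcinj : Function.Injective c)
    (F : Polynomial ℝ)
    (hF : F = Polynomial.C K * X ^ a * (X ^ n - 1) ^ b *
      ∏ i : Fin d, (X ^ n - Polynomial.C (c i)))
    (hdeg : 0 < F.natDegree) :
    ∃ (K' : ℝ) (a' b' d' : ℕ) (c' : Fin d' → ℝ), K' ≠ 0 ∧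
      (∀ i, c' i ∈ Set.Ioo (0 : ℝ) 1) ∧ Function.Injective c' ∧
      derivative F = Polynomial.C K' * X ^ a' * (X ^ n - 1) ^ b' *
        ∏ i : Fin d', (X ^ n - Polynomial.C (c' i)) ∧
      (0 < a → a' = a - 1) ∧ (a = 0 → a' = n - 1) ∧
      (0 < b → b' = b - 1) ∧ (b = 0 → b' = 0) := by
  classical
  have hn' : (n:ℝ) ≠ 0 := Nat.cast_ne_zero.2 hn.ne'
  set V : Polynomial ℝ := ∏ i : Fin d, (X - Polynomial.C (c i)) with hV
  set P : Polynomial ℝ := (X - 1) ^ b * V with hP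
  have hX1 : (X - 1 : Polynomial ℝ) = X - Polynomial.C 1 := by rw [map_one]
  have hVm : V.Monic := monic_prod_of_monic _ _ fun i _ => monic_X_sub_C _
  have hX1m : (X - 1 : Polynomial ℝ).Monic := by rw [hX1]; exact monic_X_sub_C 1
  have hPm : P.Monic := (hX1m.pow b).mul hVm
  have hVdeg : V.natDegree = d := by
    rw [hV, natDegree_prod_of_monic _ _ fun i _ => monic_X_sub_C _]
    simp [natDegree_X_sub_C]
  have hPdeg : P.natDegree = b + d := by
    rw [hP, (hX1m.pow b).natDegree_mul hVm, natDegree_pow, hVdeg, hX1, natDegree_X_sub_C,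
      mul_one]
  have hPcomp : P.comp (X ^ n) = (X ^ n - 1) ^ b * ∏ i : Fin d, (X ^ n - Polynomial.C (c i)) := by
    simp [hP, hV, mul_comp, pow_comp, sub_comp, one_comp, X_comp, C_comp, prod_comp]
  have hFP : F = Polynomial.C K * (X ^ a * P.comp (X ^ n)) := by
    rw [hF, hPcomp]; ring
  have hFdeg : F.natDegree = a + (b + d) * n := by
    have hm : (X ^ a * P.comp (X ^ n)).Monic :=
      (monic_X_pow a).mul (hPm.comp (monic_X_pow n) (by simp [natDegree_X_pow]; omega))
    rw [hFP, natDegree_C_mul hK, (monic_X_pow a).natDegree_mul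
      (hPm.comp (monic_X_pow n) (by simp [natDegree_X_pow]; omega)),
      natDegree_X_pow, natDegree_comp, natDegree_X_pow, hPdeg]
  set P' : Polynomial ℝ := derivative P with hP'def
  set Q : Polynomial ℝ := Polynomial.C (a:ℝ) * P + Polynomial.C (n:ℝ) * (X * P') with hQdef
  have hDF : derivative F = Polynomial.C K *
      (Polynomial.C (a:ℝ) * X ^ (a-1) * P.comp (X ^ n)
        + X ^ a * (Polynomial.C (n:ℝ) * X ^ (n-1) * P'.comp (X ^ n))) := by
    rw [hFP, derivative_C_mul, derivative_mul, derivative_comp, derivative_X_pow,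
      derivative_X_pow]
  have hdvdP' : ∀ _ : 0 < b,
      P' = (X-1)^(b-1) * (Polynomial.C (b:ℝ) * V + (X-1) * derivative V) := by
    intro hb
    obtain ⟨b'', rfl⟩ : ∃ b'', b = b'' + 1 := ⟨b-1, by omega⟩
    rw [hP'def, hP, derivative_mul, derivative_pow]
    simp only [hX1, derivative_X_sub_C, Nat.add_sub_cancel, mul_one]
    push_cast
    ring
  -- roots of P
  have hPc : ∀ i, P.eval (c i) = 0 := by
    intro i
    have hVc : V.eval (c i) = 0 := by
      rw [hV, eval_prod]
      exact Finset.prod_eq_zero (Finset.mem_univ i) (by simp)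
    simp [hP, eval_mul, hVc]
  have hP1 : 0 < b → P.eval 1 = 0 := by
    intro hb
    simp [hP, eval_mul, eval_pow, zero_pow hb.ne']
  have hPc1 : P.coeff (b+d) = 1 := by rw [← hPdeg]; exact hPm.coeff_natDegree
  have hP'coeff : 0 < b + d → P'.coeff (b+d-1) = ((b+d : ℕ) : ℝ) := by
    intro hbd
    rw [hP'def, coeff_derivative, show b+d-1+1 = b+d by omega, hPc1, one_mul]
    push_cast [Nat.cast_sub (show 1 ≤ b+d by omega)]
    ring
  -- the auxiliary real function
  set q : ℝ := (a:ℝ)/(n:ℝ) with hq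
  have hq0 : 0 ≤ q := by positivity
  set g : ℝ → ℝ := fun x => x ^ q * P.eval x with hg
  set g' : ℝ → ℝ := fun x => q * x ^ (q - 1) * P.eval x + x ^ q * P'.eval x with hg'
  have hgc : ContinuousOn g (Set.Icc 0 1) :=
    ((Real.continuous_rpow_const hq0).mul (Polynomial.continuous_aeval P)).continuousOn
  have hgd : ∀ x ∈ Set.Ioo (0:ℝ) 1, HasDerivAt g (g' x) x := by
    intro x hx
    have h1 : HasDerivAt (fun x : ℝ => x ^ q) (q * x ^ (q-1)) x :=
      Real.hasDerivAt_rpow_const (Or.inl (ne_of_gt hx.1))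
    have h2 : HasDerivAt (fun y : ℝ => P.eval y) (P'.eval x) x := P.hasDerivAt x
    have h3 := h1.mul h2
    simp only [hg, hg']
    exact h3
  set s : Finset ℝ := Finset.image c Finset.univ with hs
  have hscard : s.card = d := by
    rw [hs, Finset.card_image_of_injective _ hcinj, Finset.card_univ, Fintype.card_fin]
  have h1s : (1:ℝ) ∉ s := by
    simp only [hs, Finset.mem_image, Finset.mem_univ, true_and, not_exists]
    exact fun i => (hc i).2.ne
  have h0s : (0:ℝ) ∉ s := by
    simp only [hs, Finset.mem_image, Finset.mem_univ, true_and, not_exists]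
    exact fun i => (hc i).1.ne'
  set Tb : Finset ℝ := if 0 < b then {(1:ℝ)} else ∅ with hTb
  have hsTb : (s ∪ Tb).card = d + (if 0 < b then 1 else 0) := by
    by_cases hb : 0 < b
    · rw [hTb, if_pos hb, if_pos hb,
        Finset.card_union_of_disjoint (Finset.disjoint_singleton_right.2 h1s), hscard,
        Finset.card_singleton]
    · rw [hTb, if_neg hb, if_neg hb, Finset.union_empty, hscard, add_zero]
  have hsTb01 : ∀ x ∈ s ∪ Tb, x ∈ Set.Icc (0:ℝ) 1 := by
    intro x hx
    rcases Finset.mem_union.mp hx with hx | hx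
    · obtain ⟨i, _, rfl⟩ := Finset.mem_image.mp hx
      exact ⟨(hc i).1.le, (hc i).2.le⟩
    · rw [hTb] at hx
      by_cases hb : 0 < b
      · rw [if_pos hb, Finset.mem_singleton] at hx
        subst hx; exact ⟨zero_le_one, le_refl 1⟩
      · rw [if_neg hb] at hx; exact absurd hx (Finset.notMem_empty x)
  have hsTbroot : ∀ x ∈ s ∪ Tb, g x = 0 := by
    intro x hx
    rcases Finset.mem_union.mp hx with hx | hx
    · obtain ⟨i, _, rfl⟩ := Finset.mem_image.mp hx
      rw [hg]; simp [hPc i]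
    · rw [hTb] at hx
      by_cases hb : 0 < b
      · rw [if_pos hb, Finset.mem_singleton] at hx
        subst hx; rw [hg]; simp [hP1 hb]
      · rw [if_neg hb] at hx; exact absurd hx (Finset.notMem_empty x)
  rcases Nat.eq_zero_or_pos a with hA | hA
  · -- CASE a = 0
    subst hA
    have hbd : 0 < b + d := by
      rcases Nat.eq_zero_or_pos (b+d) with h0 | h; · rw [hFdeg, h0] at hdeg; simp at hdeg
      exact h
    have hP'deg : P'.natDegree = b + d - 1 := by
      refine le_antisymm (by have h := natDegree_derivative_le P; rw [hPdeg] at h; exact h)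
        (le_natDegree_of_ne_zero ?_)
      rw [hP'coeff hbd]
      exact_mod_cast hbd.ne'
    have hlcne : P'.leadingCoeff ≠ 0 := by
      rw [leadingCoeff, hP'deg, hP'coeff hbd]
      exact_mod_cast hbd.ne'
    have hP'ne : P' ≠ 0 := leadingCoeff_ne_zero.mp hlcne
    obtain ⟨e, he, h01, hroot⟩ := chain_aux g g' hgc hgd (s ∪ Tb) hsTb01 hsTbroot
    have hroot' : ∀ j, P'.eval (e j) = 0 := by
      intro j
      have h := hroot j
      simp only [hg'] at h
      have hq' : q = 0 := by rw [hq]; norm_num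
      rw [hq'] at h
      simpa using h
    have hdegm : P'.natDegree = (b-1) + ((s ∪ Tb).card - 1) := by
      rw [hP'deg, hsTb]
      by_cases hb : 0 < b <;> simp [hb] <;> omega
    have hdvd : (X-1)^(b-1) ∣ P' := by
      by_cases hb : 0 < b
      · exact ⟨_, hdvdP' hb⟩
      · have : b = 0 := by omega
        rw [this]; simp
    have hfact := core_factor P' hP'ne (b-1) ((s ∪ Tb).card - 1) hdegm hdvd e he h01 hroot'
    have hcomp : P'.comp (X^n) = Polynomial.C P'.leadingCoeff * (X^n - 1)^(b-1) *
        ∏ j : Fin ((s ∪ Tb).card - 1), (X^n - Polynomial.C (e j)) := by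
      conv_lhs => rw [hfact]
      simp [mul_comp, pow_comp, sub_comp, one_comp, X_comp, C_comp, prod_comp]
    refine ⟨K * n * P'.leadingCoeff, n-1, b-1, (s ∪ Tb).card - 1, e,
      mul_ne_zero (mul_ne_zero hK hn') hlcne, h01, he, ?_, ?_, fun _ => rfl, fun _ => rfl,
      fun h => by omega⟩
    · rw [hDF, hcomp]
      simp only [Nat.cast_zero, map_zero, zero_mul, zero_add, pow_zero, one_mul, map_mul]
      ring
    · intro h; omega
  · -- CASE a > 0
    have hQcoefflc : Q.natDegree = b + d ∧ Q.leadingCoeff = (a:ℝ) + n*(b+d) := by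
      rcases Nat.eq_zero_or_pos (b+d) with hbd0 | hbd
      · have hPone : P = 1 := by
          have := hPm.natDegree_eq_zero.mp (by rw [hPdeg, hbd0])
          exact this
        have hQC : Q = Polynomial.C (a:ℝ) := by
          rw [hQdef, hPone, hP'def, hPone]
          simp
        have hb0 : b = 0 := by omega
        have hd0 : d = 0 := by omega
        subst hb0; subst hd0
        constructor
        · rw [hQC, natDegree_C]
        · rw [hQC]
          simp [leadingCoeff]
      · have hcoeff : Q.coeff (b+d) = (a:ℝ) + n*(b+d) := by
          have hXP' : (X * P').coeff (b+d) = ((b+d : ℕ) : ℝ) := by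
            obtain ⟨k, hk⟩ : ∃ k, b + d = k + 1 := ⟨b+d-1, by omega⟩
            conv_lhs => rw [hk, coeff_X_mul]
            rw [show k = b+d-1 by omega]
            exact hP'coeff hbd
          rw [hQdef, coeff_add, coeff_C_mul, coeff_C_mul, hPc1, mul_one, hXP']
          push_cast
          ring
        have hle : Q.natDegree ≤ b + d := by
          refine le_trans (natDegree_add_le _ _) (max_le ?_ ?_)
          · exact (natDegree_C_mul_le _ _).trans hPdeg.le
          · refine (natDegree_C_mul_le _ _).trans (natDegree_mul_le.trans ?_)
            have h1 := natDegree_derivative_le P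
            rw [hPdeg] at h1
            simp only [natDegree_X, hP'def]
            omega
        have hlcpos : (0:ℝ) < (a:ℝ) + n*(b+d) := by
          have h1 : (1:ℝ) ≤ (a:ℝ) := by exact_mod_cast hA
          have h2 : (0:ℝ) ≤ (n:ℝ)*(b+d) := by positivity
          linarith
        have hdq : Q.natDegree = b + d :=
          le_antisymm hle (le_natDegree_of_ne_zero (by rw [hcoeff]; exact hlcpos.ne'))
        exact ⟨hdq, by rw [leadingCoeff, hdq, hcoeff]⟩
    have hlcne : Q.leadingCoeff ≠ 0 := by
      rw [hQcoefflc.2]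
      have h1 : (1:ℝ) ≤ (a:ℝ) := by exact_mod_cast hA
      have h2 : (0:ℝ) ≤ (n:ℝ)*(b+d) := by positivity
      linarith
    have hQne : Q ≠ 0 := leadingCoeff_ne_zero.mp hlcne
    have hQF : derivative F = Polynomial.C K * (X^(a-1) * Q.comp (X^n)) := by
      rw [hDF, hQdef]
      simp only [add_comp, mul_comp, X_comp, C_comp, pow_comp]
      have hxx : (X:Polynomial ℝ)^a * X^(n-1) = X^(a-1) * X^n := by
        rw [← pow_add, ← pow_add]; congr 1; omega
      linear_combination (Polynomial.C K * Polynomial.C (n:ℝ) * P'.comp (X^n)) * hxx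
    set T : Finset ℝ := insert (0:ℝ) (s ∪ Tb) with hT
    have hTcard : T.card = 1 + (d + (if 0 < b then 1 else 0)) := by
      rw [hT, Finset.card_insert_of_notMem, hsTb, add_comm]
      intro h
      rcases Finset.mem_union.mp h with h | h
      · exact h0s h
      · rw [hTb] at h
        by_cases hb : 0 < b
        · rw [if_pos hb, Finset.mem_singleton] at h; norm_num at h
        · rw [if_neg hb] at h; exact absurd h (Finset.notMem_empty _)
    have hT01 : ∀ x ∈ T, x ∈ Set.Icc (0:ℝ) 1 := by
      intro x hx
      rcases Finset.mem_insert.mp hx with rfl | hx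
      · exact ⟨le_refl 0, zero_le_one⟩
      · exact hsTb01 x hx
    have hTroot : ∀ x ∈ T, g x = 0 := by
      intro x hx
      rcases Finset.mem_insert.mp hx with rfl | hx
      · have hqpos : (0:ℝ) < q := by
          rw [hq]
          exact div_pos (by exact_mod_cast hA) (by exact_mod_cast hn)
        simp only [hg]
        rw [Real.zero_rpow hqpos.ne', zero_mul]
      · exact hsTbroot x hx
    obtain ⟨e, he, h01, hroot⟩ := chain_aux g g' hgc hgd T hT01 hTroot
    have hroot' : ∀ j, Q.eval (e j) = 0 := by
      intro j
      have h := hroot j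
      simp only [hg'] at h
      have hx0 : (0:ℝ) < e j := (h01 j).1
      have e1 : (e j) ^ (1 - q) * (e j) ^ (q - 1) = 1 := by
        rw [← Real.rpow_add hx0]
        norm_num
      have e2 : (e j) ^ (1 - q) * (e j) ^ q = e j := by
        rw [← Real.rpow_add hx0]
        norm_num
      have e3 : (n:ℝ) * q = a := by rw [hq]; field_simp
      have key : Q.eval (e j) = (n:ℝ) * (e j) ^ (1 - q) *
          (q * (e j) ^ (q - 1) * P.eval (e j) + (e j) ^ q * P'.eval (e j)) := by
        rw [hQdef]
        simp only [eval_add, eval_mul, eval_C, eval_X]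
        calc (a:ℝ) * P.eval (e j) + (n:ℝ) * ((e j) * P'.eval (e j))
            = ((n:ℝ) * q) * ((e j) ^ (1 - q) * (e j) ^ (q - 1)) * P.eval (e j)
              + (n:ℝ) * (((e j) ^ (1 - q) * (e j) ^ q) * P'.eval (e j)) := by
              rw [e1, e2, e3]; ring
          _ = (n:ℝ) * (e j) ^ (1 - q) *
              (q * (e j) ^ (q - 1) * P.eval (e j) + (e j) ^ q * P'.eval (e j)) := by ring
      rw [key, h, mul_zero]
    have hdegm : Q.natDegree = (b-1) + (T.card - 1) := by
      rw [hQcoefflc.1, hTcard]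
      by_cases hb : 0 < b <;> simp [hb] <;> omega
    have hdvd : (X-1)^(b-1) ∣ Q := by
      by_cases hb : 0 < b
      · refine ⟨Polynomial.C (a:ℝ) * ((X-1)*V) + Polynomial.C (n:ℝ) *
          (X * (Polynomial.C (b:ℝ) * V + (X-1) * derivative V)), ?_⟩
        rw [hQdef, hdvdP' hb, hP]
        obtain ⟨b'', rfl⟩ : ∃ b'', b = b'' + 1 := ⟨b-1, by omega⟩
        simp only [Nat.add_sub_cancel]
        ring
      · have : b = 0 := by omega
        rw [this]; simp
    have hfact := core_factor Q hQne (b-1) (T.card - 1) hdegm hdvd e he h01 hroot'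
    have hcomp : Q.comp (X^n) = Polynomial.C Q.leadingCoeff * (X^n - 1)^(b-1) *
        ∏ j : Fin (T.card - 1), (X^n - Polynomial.C (e j)) := by
      conv_lhs => rw [hfact]
      simp [mul_comp, pow_comp, sub_comp, one_comp, X_comp, C_comp, prod_comp]
    refine ⟨K * Q.leadingCoeff, a-1, b-1, T.card - 1, e,
      mul_ne_zero hK hlcne, h01, he, ?_, fun _ => rfl, ?_, fun _ => rfl, fun h => by omega⟩
    · rw [hQF, hcomp, map_mul]
      ring
    · intro h; omega
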